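/- Fix a two-sided p-periodic Jacobi matrix J₀ with parameters (a⁰,b⁰) and fix ε > 0. There is a constant C, depending only on ε, such that for every sequence of Jacobi parameters (a,b) indexed by {1,2,…} with ε < a_n < ε^{−1} for all n and for all integers n ≥ m ≥ 1: |a_n − a⁰_n| + |b_n − b⁰_n| ≤ d̃_m((a,b),(a⁰,b⁰)) + C · Σ_{r=m}^{n−p+1} d̃_r((a,b), T_{J₀}), where the sum is empty when n − p + 1 < m. -/

import Mathlib

open scoped ComplexConjugate

noncomputable section

/-- The transfer matrix `Λ_n(x) = (1/a_n)·[[x − b_n, −1], [a_n², 0]]`. -/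
def lamMat (a b : ℤ → ℝ) (n : ℤ) : Matrix (Fin 2) (Fin 2) (Polynomial ℝ) :=
  Polynomial.C (a n)⁻¹ • !![Polynomial.X - Polynomial.C (b n), -1;
    Polynomial.C ((a n) ^ 2), 0]

/-- The ordered product `Λ_n ⋯ Λ_2 Λ_1`. -/
def tMat (a b : ℤ → ℝ) : ℕ → Matrix (Fin 2) (Fin 2) (Polynomial ℝ)
  | 0 => 1
  | n + 1 => lamMat a b ((n : ℤ) + 1) * tMat a b n

/-- The discriminant `Δ_{(a,b)}(x) = Tr(Λ_p(x) ⋯ Λ_1(x))`. -/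
def disc (a b : ℤ → ℝ) (p : ℕ) : Polynomial ℝ := Matrix.trace (tMat a b p)

/-- Membership in the isospectral torus. -/
def InTorus (p : ℕ) (a0 b0 a' b' : ℤ → ℝ) : Prop :=
  (∀ n, 0 < a' n) ∧ Function.Periodic a' (p : ℤ) ∧ Function.Periodic b' (p : ℤ) ∧
    disc a' b' p = disc a0 b0 p

/-- `d̃_m((a,b),(a',b')) = Σ_{k=0}^{p−1}(|a_{m+k} − a'_{m+k}| + |b_{m+k} − b'_{m+k}|)`. -/
def dFin (p : ℕ) (a b : ℕ → ℝ) (a' b' : ℤ → ℝ) (m : ℕ) : ℝ :=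
  ∑ k ∈ Finset.range p,
    (|a (m + k) - a' ((m : ℤ) + k)| + |b (m + k) - b' ((m : ℤ) + k)|)

/-- `d̃_m((a,b), T_{J₀})`. -/
def dFinT (p : ℕ) (a0 b0 : ℤ → ℝ) (a b : ℕ → ℝ) (m : ℕ) : ℝ :=
  sInf {x : ℝ | ∃ a' b' : ℤ → ℝ, InTorus p a0 b0 a' b' ∧ x = dFin p a b a' b' m}

open Finset Polynomial

/-- product difference bound -/
lemma prodDiff (q : ℕ) (x y : ℕ → ℝ) (M : ℝ) (hM : 1 ≤ M)
    (hx : ∀ k ∈ Finset.range q, |x k| ≤ M) (hy : ∀ k ∈ Finset.range q, |y k| ≤ M) :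
    |∏ k ∈ Finset.range q, x k - ∏ k ∈ Finset.range q, y k| ≤
      (∑ k ∈ Finset.range q, |x k - y k|) * M ^ q := by
  induction q with
  | zero => simp
  | succ n ih =>
    have hxn := hx n (by simp)
    have hyn := hy n (by simp)
    have hx' : ∀ k ∈ Finset.range n, |x k| ≤ M := fun k hk => hx k (by simp at hk ⊢; omega)
    have hy' : ∀ k ∈ Finset.range n, |y k| ≤ M := fun k hk => hy k (by simp at hk ⊢; omega)
    have ih' := ih hx' hy'
    rw [Finset.prod_range_succ, Finset.prod_range_succ]
    have key : (∏ k ∈ range n, x k) * x n - (∏ k ∈ range n, y k) * y n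
        = ((∏ k ∈ range n, x k) - (∏ k ∈ range n, y k)) * x n
          + (∏ k ∈ range n, y k) * (x n - y n) := by ring
    have hprodY : |∏ k ∈ range n, y k| ≤ M ^ n := by
      calc |∏ k ∈ range n, y k| = ∏ k ∈ range n, |y k| := by rw [Finset.abs_prod]
        _ ≤ ∏ k ∈ range n, M := Finset.prod_le_prod (fun k _ => abs_nonneg _) (fun k hk => hy' k hk)
        _ = M ^ n := by simp
    calc |(∏ k ∈ range n, x k) * x n - (∏ k ∈ range n, y k) * y n|
        ≤ |(∏ k ∈ range n, x k) - ∏ k ∈ range n, y k| * |x n| + |∏ k ∈ range n, y k| * |x n - y n| := by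
          rw [key]; refine (abs_add_le _ _).trans ?_; rw [abs_mul, abs_mul]
      _ ≤ ((∑ k ∈ range n, |x k - y k|) * M ^ n) * M + M ^ n * |x n - y n| := by
          have t1 : |(∏ k ∈ range n, x k) - ∏ k ∈ range n, y k| * |x n|
              ≤ ((∑ k ∈ range n, |x k - y k|) * M ^ n) * M :=
            mul_le_mul ih' hxn (abs_nonneg _) (by positivity)
          have t2 : |∏ k ∈ range n, y k| * |x n - y n| ≤ M ^ n * |x n - y n| :=
            mul_le_mul_of_nonneg_right hprodY (abs_nonneg _)
          linarith
      _ ≤ (∑ k ∈ range (n+1), |x k - y k|) * M ^ (n+1) := by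
          rw [Finset.sum_range_succ]
          have h1 : M ^ n ≤ M ^ (n+1) := by
            calc M ^ n = M ^ n * 1 := by ring
              _ ≤ M ^ n * M := by
                  have : (0:ℝ) ≤ M ^ n := by positivity
                  nlinarith
              _ = M ^ (n+1) := by ring
          have h2 : (0:ℝ) ≤ ∑ k ∈ range n, |x k - y k| := Finset.sum_nonneg fun _ _ => abs_nonneg _
          have h3 : (0:ℝ) ≤ |x n - y n| := abs_nonneg _
          nlinarith [mul_nonneg (mul_nonneg h3 (pow_nonneg (le_trans zero_le_one hM) n))
            (sub_nonneg.mpr hM), pow_succ M n]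

/-- shifted sum of a periodic function is independent of the window start -/
lemma periodicSumShift (f : ℤ → ℝ) (p : ℕ) (hf : Function.Periodic f (p : ℤ)) (m m' : ℤ) :
    ∑ k ∈ Finset.range p, f (m + k) = ∑ k ∈ Finset.range p, f (m' + k) := by
  suffices H : ∀ m : ℤ, ∑ k ∈ Finset.range p, f (m + k) = ∑ k ∈ Finset.range p, f (0 + k) by
    rw [H m, H m']
  have step : ∀ m : ℤ, ∑ k ∈ Finset.range p, f (m + 1 + k) = ∑ k ∈ Finset.range p, f (m + k) := by
    intro m
    have e1 : ∑ k ∈ Finset.range (p+1), f (m + k) = (∑ k ∈ Finset.range p, f (m + (k+1))) + f (m + 0) :=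
      Finset.sum_range_succ' (fun k => f (m + k)) p
    have e2 : ∑ k ∈ Finset.range (p+1), f (m + k) = (∑ k ∈ Finset.range p, f (m + k)) + f (m + p) :=
      Finset.sum_range_succ (fun k => f (m + k)) p
    have e3 : ∀ k : ℕ, f (m + ((k : ℤ)+1)) = f (m + 1 + k) := by
      intro k; ring_nf
    have e4 : f (m + p) = f m := hf m
    push_cast at e1 e2
    rw [Finset.sum_congr rfl (fun k _ => e3 k)] at e1
    have := e1.symm.trans e2
    simp only [add_zero] at this
    linarith
  intro m
  induction m using Int.induction_on with
  | zero => rfl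
  | succ i ih => rw [show ((i:ℤ)+1) = (i:ℤ) + 1 by ring, step]; exact ih
  | pred i ih =>
      have h := step (-(i:ℤ) - 1)
      calc ∑ k ∈ Finset.range p, f (-(i:ℤ) - 1 + k)
          = ∑ k ∈ Finset.range p, f ((-(i:ℤ) - 1) + 1 + k) := h.symm
        _ = ∑ k ∈ Finset.range p, f (-(i:ℤ) + k) := by
            apply Finset.sum_congr rfl; intro k _; congr 1; ring
        _ = ∑ k ∈ Finset.range p, f (0 + k) := ih

lemma periodicProdShift (f : ℤ → ℝ) (p : ℕ) (hf : Function.Periodic f (p : ℤ))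
    (hf0 : ∀ j, f j ≠ 0) (m m' : ℤ) :
    ∏ k ∈ Finset.range p, f (m + k) = ∏ k ∈ Finset.range p, f (m' + k) := by
  suffices H : ∀ m : ℤ, ∏ k ∈ Finset.range p, f (m + k) = ∏ k ∈ Finset.range p, f (0 + k) by
    rw [H m, H m']
  have step : ∀ m : ℤ, ∏ k ∈ Finset.range p, f (m + 1 + k) = ∏ k ∈ Finset.range p, f (m + k) := by
    intro m
    have e1 : ∏ k ∈ Finset.range (p+1), f (m + k) = (∏ k ∈ Finset.range p, f (m + (k+1))) * f (m + 0) :=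
      Finset.prod_range_succ' (fun k => f (m + k)) p
    have e2 : ∏ k ∈ Finset.range (p+1), f (m + k) = (∏ k ∈ Finset.range p, f (m + k)) * f (m + p) :=
      Finset.prod_range_succ (fun k => f (m + k)) p
    have e3 : ∀ k : ℕ, f (m + ((k : ℤ)+1)) = f (m + 1 + k) := by intro k; ring_nf
    have e4 : f (m + p) = f m := hf m
    push_cast at e1 e2
    rw [Finset.prod_congr rfl (fun k _ => e3 k)] at e1
    have e5 := e1.symm.trans e2
    simp only [add_zero] at e5
    rw [e4] at e5
    exact mul_right_cancel₀ (hf0 m) e5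
  intro m
  induction m using Int.induction_on with
  | zero => rfl
  | succ i ih => rw [show ((i:ℤ)+1) = (i:ℤ) + 1 by ring, step]; exact ih
  | pred i ih =>
      have h := step (-(i:ℤ) - 1)
      calc ∏ k ∈ Finset.range p, f (-(i:ℤ) - 1 + k)
          = ∏ k ∈ Finset.range p, f ((-(i:ℤ) - 1) + 1 + k) := h.symm
        _ = ∏ k ∈ Finset.range p, f (-(i:ℤ) + k) := by
            apply Finset.prod_congr rfl; intro k _; congr 1; ring
        _ = ∏ k ∈ Finset.range p, f (0 + k) := ih


/-- window representative -/
lemma windowRep (p : ℕ) (hp : 1 ≤ p) (s j : ℤ) :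
    ∃ k : ℕ, k < p ∧ ∃ t : ℤ, j = s + k + t * p := by
  have hp' : (0:ℤ) < p := by exact_mod_cast hp
  refine ⟨((j - s) % p).toNat, ?_, (j - s) / p, ?_⟩
  · have h1 : (j - s) % p < p := Int.emod_lt_of_pos _ hp'
    have h2 : 0 ≤ (j - s) % p := Int.emod_nonneg _ (by positivity)
    omega
  · have h2 : 0 ≤ (j - s) % p := Int.emod_nonneg _ (by positivity)
    have hdm : (j - s) % p + p * ((j - s) / p) = j - s := Int.emod_add_mul_ediv _ _
    rw [Int.toNat_of_nonneg h2]; linarith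

lemma periodicAtRep (f : ℤ → ℝ) (p : ℕ) (hf : Function.Periodic f (p : ℤ))
    {s j : ℤ} {k : ℕ} {t : ℤ} (h : j = s + k + t * p) : f j = f (s + k) := by
  subst h; exact (hf.int_mul t) (s + k)

/-- the `b`-part of the key lemma -/
lemma KLb (p : ℕ) (hp : 1 ≤ p) (β β' : ℤ → ℝ) (s : ℤ)
    (hsum : ∑ k ∈ Finset.range p, β (s + k) = ∑ k ∈ Finset.range p, β' (s + k)) :
    |β (s + ((p-1 : ℕ) : ℤ)) - β' (s + ((p-1 : ℕ) : ℤ))| ≤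
      ∑ k ∈ Finset.range (p-1), |β (s + k) - β' (s + k)| := by
  obtain ⟨q, rfl⟩ : ∃ q, p = q + 1 := ⟨p - 1, by omega⟩
  simp only [Nat.add_sub_cancel] at *
  rw [Finset.sum_range_succ, Finset.sum_range_succ] at hsum
  have key : β (s + q) - β' (s + q)
      = ∑ k ∈ Finset.range q, (β' (s + k) - β (s + k)) := by
    rw [Finset.sum_sub_distrib]; linarith
  rw [key]
  refine (Finset.abs_sum_le_sum_abs _ _).trans ?_
  apply Finset.sum_le_sum
  intro k _
  rw [abs_sub_comm]

/-- the `a`-part of the key lemma -/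
lemma KLa (p : ℕ) (hp : 1 ≤ p) (α α' : ℤ → ℝ) (s : ℤ) (ℓ M : ℝ) (hℓ : 0 < ℓ) (hM : 1 ≤ M)
    (hbnd : ∀ k : ℕ, k < p → ℓ ≤ α (s + k) ∧ α (s + k) ≤ M ∧ ℓ ≤ α' (s + k) ∧ α' (s + k) ≤ M)
    (hprod : ∏ k ∈ Finset.range p, α (s + k) = ∏ k ∈ Finset.range p, α' (s + k)) :
    |α (s + ((p-1 : ℕ) : ℤ)) - α' (s + ((p-1 : ℕ) : ℤ))| ≤
      (M ^ p / ℓ ^ (p-1)) * ∑ k ∈ Finset.range (p-1), |α (s + k) - α' (s + k)| := by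
  obtain ⟨q, rfl⟩ : ∃ q, p = q + 1 := ⟨p - 1, by omega⟩
  simp only [Nat.add_sub_cancel] at *
  rw [Finset.prod_range_succ, Finset.prod_range_succ] at hprod
  set Q := ∏ k ∈ Finset.range q, α (s + k) with hQ
  set Q' := ∏ k ∈ Finset.range q, α' (s + k) with hQ'
  have hbq := hbnd q (by omega)
  have hQpos : (0:ℝ) < Q := Finset.prod_pos fun k hk =>
    lt_of_lt_of_le hℓ (hbnd k (by simp at hk; omega)).1
  have hQlb : ℓ ^ q ≤ Q := by
    rw [hQ]
    calc ℓ ^ q = ∏ _k ∈ Finset.range q, ℓ := by simp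
      _ ≤ Q := Finset.prod_le_prod (fun k _ => le_of_lt hℓ)
          (fun k hk => (hbnd k (by simp at hk; omega)).1)
  have hkey : (α (s + q) - α' (s + q)) * Q = α' (s + q) * (Q' - Q) := by
    have : Q * α (s + q) = Q' * α' (s + q) := hprod
    ring_nf
    nlinarith [this]
  have habs : |α (s + q) - α' (s + q)| * Q = |α' (s + q)| * |Q' - Q| := by
    have h2 : |(α (s + q) - α' (s + q)) * Q| = |α' (s + q) * (Q' - Q)| := by rw [hkey]
    rw [abs_mul, abs_mul, abs_of_pos hQpos] at h2
    exact h2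
  have hdiff : |Q' - Q| ≤ (∑ k ∈ Finset.range q, |α (s + k) - α' (s + k)|) * M ^ q := by
    rw [abs_sub_comm]
    exact prodDiff q (fun k => α (s + k)) (fun k => α' (s + k)) M hM
      (fun k hk => by rw [abs_of_pos (lt_of_lt_of_le hℓ (hbnd k (by simp at hk; omega)).1)]
                      exact (hbnd k (by simp at hk; omega)).2.1)
      (fun k hk => by rw [abs_of_pos (lt_of_lt_of_le hℓ (hbnd k (by simp at hk; omega)).2.2.1)]
                      exact (hbnd k (by simp at hk; omega)).2.2.2)
  set Sa := ∑ k ∈ Finset.range q, |α (s + k) - α' (s + k)| with hSa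
  have hSann : 0 ≤ Sa := Finset.sum_nonneg fun _ _ => abs_nonneg _
  have hα'b : |α' (s + q)| ≤ M := by
    rw [abs_of_pos (lt_of_lt_of_le hℓ hbq.2.2.1)]; exact hbq.2.2.2
  have hstep : |α (s + q) - α' (s + q)| * ℓ ^ q ≤ M ^ (q + 1) * Sa := by
    calc |α (s + q) - α' (s + q)| * ℓ ^ q ≤ |α (s + q) - α' (s + q)| * Q :=
          mul_le_mul_of_nonneg_left hQlb (abs_nonneg _)
      _ = |α' (s + q)| * |Q' - Q| := habs
      _ ≤ M * (Sa * M ^ q) := mul_le_mul hα'b hdiff (abs_nonneg _) (by linarith)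
      _ = M ^ (q + 1) * Sa := by ring
  have hl : (0:ℝ) < ℓ ^ q := by positivity
  rw [div_mul_eq_mul_div, le_div_iff₀ hl]
  linarith [hstep]

/-- telescoping chain bound -/
lemma chainLe (g E : ℕ → ℝ) (m : ℕ) : ∀ R, m ≤ R →
    (∀ r, m ≤ r → r < R → g (r+1) ≤ g r + E r) →
    g R ≤ g m + ∑ r ∈ Finset.Ico m R, E r := by
  intro R
  induction R with
  | zero => intro h _; have : m = 0 := by omega
            subst this; simp
  | succ R ih =>
    intro hmR hstep
    rcases Nat.lt_or_ge m (R+1) with h | h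
    swap
    · have : m = R + 1 := by omega
      subst this; simp
    · have hmR' : m ≤ R := by omega
      have h1 := ih hmR' (fun r h1 h2 => hstep r h1 (by omega))
      have h2 := hstep R hmR' (by omega)
      rw [Finset.sum_Ico_succ_top hmR']
      linarith

/-- shifted-window partial sums are dominated -/
lemma sumTail (q : ℕ) (t : ℕ → ℝ) (ht : ∀ k, 0 ≤ t k) :
    ∑ k ∈ Finset.range q, t (k+1) ≤ ∑ k ∈ Finset.range (q+1), t k := by
  rw [Finset.sum_range_succ' t q]
  have := ht 0
  linarith

lemma lam00 (a b : ℤ → ℝ) (n : ℤ) : lamMat a b n 0 0 = C (a n)⁻¹ * (X - C (b n)) := by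
  simp [lamMat]
lemma lam01 (a b : ℤ → ℝ) (n : ℤ) : lamMat a b n 0 1 = C (a n)⁻¹ * (-1) := by
  simp [lamMat]
lemma lam10 (a b : ℤ → ℝ) (n : ℤ) : lamMat a b n 1 0 = C (a n)⁻¹ * C ((a n)^2) := by
  simp [lamMat]
lemma lam11 (a b : ℤ → ℝ) (n : ℤ) : lamMat a b n 1 1 = 0 := by
  simp [lamMat]

lemma tMat_succ_entry (a b : ℤ → ℝ) (n : ℕ) (i j : Fin 2) :
    tMat a b (n+1) i j = lamMat a b ((n:ℤ)+1) i 0 * tMat a b n 0 j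
      + lamMat a b ((n:ℤ)+1) i 1 * tMat a b n 1 j := by
  show (lamMat a b ((n:ℤ)+1) * tMat a b n) i j = _
  rw [Matrix.mul_apply, Fin.sum_univ_two]

lemma coeff_X_mul' (q : Polynomial ℝ) (k : ℕ) (hk : 1 ≤ k) :
    (X * q).coeff k = q.coeff (k-1) := by
  obtain ⟨j, rfl⟩ : ∃ j, k = j + 1 := ⟨k - 1, by omega⟩
  simp [Polynomial.coeff_X_mul]

/-- Coefficient facts about the transfer matrix product. -/
lemma tMat_coeffs (a b : ℤ → ℝ) :
    ∀ n : ℕ, 1 ≤ n →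
    (∀ k, n < k → (tMat a b n 0 0).coeff k = 0) ∧
    ((tMat a b n 0 0).coeff n = (∏ i ∈ Finset.range n, a (1 + (i:ℤ)))⁻¹) ∧
    ((tMat a b n 0 0).coeff (n-1)
        = -(∑ i ∈ Finset.range n, b (1 + (i:ℤ))) * (∏ i ∈ Finset.range n, a (1 + (i:ℤ)))⁻¹) ∧
    (∀ k, n ≤ k → (tMat a b n 0 1).coeff k = 0) ∧
    (∀ k, n ≤ k → (tMat a b n 1 0).coeff k = 0) ∧
    (∀ k, n - 1 ≤ k → (tMat a b n 1 1).coeff k = 0) := by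
  intro n hn
  induction n with
  | zero => omega
  | succ n ih =>
    rcases Nat.lt_or_ge 0 n with h2 | h1
    swap
    · -- base : n = 0
      have hn0 : n = 0 := by omega
      subst hn0
      have one00 : (1 : Matrix (Fin 2) (Fin 2) (Polynomial ℝ)) 0 0 = 1 := by
        simp [Matrix.one_apply]
      have one01 : (1 : Matrix (Fin 2) (Fin 2) (Polynomial ℝ)) 0 1 = 0 := by
        simp [Matrix.one_apply]
      have one10 : (1 : Matrix (Fin 2) (Fin 2) (Polynomial ℝ)) 1 0 = 0 := by
        simp [Matrix.one_apply]
      have one11 : (1 : Matrix (Fin 2) (Fin 2) (Polynomial ℝ)) 1 1 = 1 := by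
        simp [Matrix.one_apply]
      have t0 : ∀ i j, tMat a b 0 i j = (1 : Matrix (Fin 2) (Fin 2) (Polynomial ℝ)) i j :=
        fun i j => rfl
      have e00 : tMat a b 1 0 0 = C (a 1)⁻¹ * (X - C (b 1)) := by
        rw [tMat_succ_entry, t0, t0, one00, one10]
        norm_num [lam00]
      have e01 : tMat a b 1 0 1 = C (a 1)⁻¹ * (-1) := by
        rw [tMat_succ_entry, t0, t0, one01, one11]
        norm_num [lam00, lam01]
      have e10 : tMat a b 1 1 0 = C ((a 1)⁻¹ * (a 1)^2) := by
        rw [tMat_succ_entry, t0, t0, one00, one10]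
        rw [map_mul]
        norm_num [lam10, lam11]
      have e11 : tMat a b 1 1 1 = 0 := by
        rw [tMat_succ_entry, t0, t0, one01, one11]
        norm_num [lam10, lam11]
      have hA : ∏ i ∈ Finset.range 1, a (1 + (i:ℤ)) = a 1 := by simp
      have hS : ∑ i ∈ Finset.range 1, b (1 + (i:ℤ)) = b 1 := by simp
      refine ⟨?_, ?_, ?_, ?_, ?_, ?_⟩
      · intro k hk
        obtain ⟨j, rfl⟩ : ∃ j, k = j + 2 := ⟨k - 2, by omega⟩
        simp [e00, coeff_C_mul, coeff_sub, Polynomial.coeff_X, Polynomial.coeff_C]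
      · rw [e00, hA]; simp [coeff_C_mul, coeff_sub, Polynomial.coeff_X, Polynomial.coeff_C]
      · rw [e00, hA, hS]
        simp [coeff_C_mul, coeff_sub, Polynomial.coeff_X, Polynomial.coeff_C]
        ring
      · intro k hk
        obtain ⟨j, rfl⟩ : ∃ j, k = j + 1 := ⟨k - 1, by omega⟩
        simp [e01, coeff_C_mul, Polynomial.coeff_C]
      · intro k hk
        obtain ⟨j, rfl⟩ : ∃ j, k = j + 1 := ⟨k - 1, by omega⟩
        rw [e10, Polynomial.coeff_C]; norm_num
      · intro k hk; simp [e11]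
    · -- step : 1 ≤ n
      have hn1 : 1 ≤ n := h2
      obtain ⟨v1, v2, v3, v4, v5, v6⟩ := ih hn1
      set c : ℝ := (a ((n:ℤ)+1))⁻¹ with hc
      set β : ℝ := b ((n:ℤ)+1) with hβ
      set A : ℝ := ∏ i ∈ Finset.range n, a (1 + (i:ℤ)) with hA
      set S : ℝ := ∑ i ∈ Finset.range n, b (1 + (i:ℤ)) with hS
      have hA' : ∏ i ∈ Finset.range (n+1), a (1 + (i:ℤ)) = A * a ((n:ℤ)+1) := by
        rw [Finset.prod_range_succ, add_comm (1:ℤ) (n:ℤ)]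
      have hS' : ∑ i ∈ Finset.range (n+1), b (1 + (i:ℤ)) = S + b ((n:ℤ)+1) := by
        rw [Finset.sum_range_succ, add_comm (1:ℤ) (n:ℤ)]
      have e00 : tMat a b (n+1) 0 0
          = C c * (X - C β) * tMat a b n 0 0 + C c * (-1) * tMat a b n 1 0 := by
        rw [tMat_succ_entry, lam00, lam01]
      have e01 : tMat a b (n+1) 0 1
          = C c * (X - C β) * tMat a b n 0 1 + C c * (-1) * tMat a b n 1 1 := by
        rw [tMat_succ_entry, lam00, lam01]
      have e10 : tMat a b (n+1) 1 0 = C (c * (a ((n:ℤ)+1))^2) * tMat a b n 0 0 := by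
        rw [tMat_succ_entry, lam10, lam11, map_mul]; ring
      have e11 : tMat a b (n+1) 1 1 = C (c * (a ((n:ℤ)+1))^2) * tMat a b n 0 1 := by
        rw [tMat_succ_entry, lam10, lam11, map_mul]; ring
      have e00' : tMat a b (n+1) 0 0
          = C c * (X * tMat a b n 0 0 - C β * tMat a b n 0 0 - tMat a b n 1 0) := by
        rw [e00]; ring
      have e01' : tMat a b (n+1) 0 1
          = C c * (X * tMat a b n 0 1 - C β * tMat a b n 0 1 - tMat a b n 1 1) := by
        rw [e01]; ring
      have coe00 : ∀ k, 1 ≤ k → (tMat a b (n+1) 0 0).coeff k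
          = c * ((tMat a b n 0 0).coeff (k-1) - β * (tMat a b n 0 0).coeff k
            - (tMat a b n 1 0).coeff k) := by
        intro k hk
        rw [e00', Polynomial.coeff_C_mul, Polynomial.coeff_sub, Polynomial.coeff_sub,
          Polynomial.coeff_C_mul, coeff_X_mul' _ _ hk]
      have coe01 : ∀ k, 1 ≤ k → (tMat a b (n+1) 0 1).coeff k
          = c * ((tMat a b n 0 1).coeff (k-1) - β * (tMat a b n 0 1).coeff k
            - (tMat a b n 1 1).coeff k) := by
        intro k hk
        rw [e01', Polynomial.coeff_C_mul, Polynomial.coeff_sub, Polynomial.coeff_sub,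
          Polynomial.coeff_C_mul, coeff_X_mul' _ _ hk]
      have han : A * a ((n:ℤ)+1) ≠ 0 ∨ True := Or.inr trivial
      refine ⟨?_, ?_, ?_, ?_, ?_, ?_⟩
      · intro k hk
        rw [coe00 k (by omega), v1 (k-1) (by omega), v1 k (by omega), v5 k (by omega)]
        ring
      · rw [coe00 (n+1) (by omega)]
        simp only [Nat.add_sub_cancel]
        rw [v2, v1 (n+1) (by omega), v5 (n+1) (by omega), hA']
        rw [mul_inv]
        ring
      · have : n + 1 - 1 = n := by omega
        rw [this, coe00 n (by omega)]
        have hn1' : n - 1 + 1 = n := by omega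
        rw [v3, v2, v5 n (by omega), hA', hS']
        rw [mul_inv]
        ring
      · intro k hk
        rw [coe01 k (by omega), v4 (k-1) (by omega), v4 k (by omega), v6 k (by omega)]
        ring
      · intro k hk
        rw [e10, Polynomial.coeff_C_mul, v1 k (by omega)]
        ring
      · intro k hk
        rw [e11, Polynomial.coeff_C_mul, v4 k (by omega)]
        ring


lemma disc_coeff_top (a b : ℤ → ℝ) (p : ℕ) (hp : 1 ≤ p) :
    (disc a b p).coeff p = (∏ i ∈ Finset.range p, a (1 + (i:ℤ)))⁻¹ := by
  obtain ⟨v1, v2, v3, v4, v5, v6⟩ := tMat_coeffs a b p hp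
  have : disc a b p = tMat a b p 0 0 + tMat a b p 1 1 := by
    show Matrix.trace _ = _
    rw [Matrix.trace_fin_two]
  rw [this, Polynomial.coeff_add, v2, v6 p (by omega), add_zero]

lemma disc_coeff_sub (a b : ℤ → ℝ) (p : ℕ) (hp : 1 ≤ p) :
    (disc a b p).coeff (p-1) = -(∑ i ∈ Finset.range p, b (1 + (i:ℤ)))
      * (∏ i ∈ Finset.range p, a (1 + (i:ℤ)))⁻¹ := by
  obtain ⟨v1, v2, v3, v4, v5, v6⟩ := tMat_coeffs a b p hp
  have : disc a b p = tMat a b p 0 0 + tMat a b p 1 1 := by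
    show Matrix.trace _ = _
    rw [Matrix.trace_fin_two]
  rw [this, Polynomial.coeff_add, v3, v6 (p-1) (by omega), add_zero]

lemma torus_prod_sum (p : ℕ) (hp : 1 ≤ p) (a0 b0 : ℤ → ℝ) (ha0pos : ∀ n, 0 < a0 n)
    (a' b' : ℤ → ℝ) (h : InTorus p a0 b0 a' b') :
    (∏ i ∈ Finset.range p, a' (1 + (i:ℤ))) = (∏ i ∈ Finset.range p, a0 (1 + (i:ℤ))) ∧
    (∑ i ∈ Finset.range p, b' (1 + (i:ℤ))) = (∑ i ∈ Finset.range p, b0 (1 + (i:ℤ))) := by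
  obtain ⟨hpos, -, -, hdisc⟩ := h
  have hA' : (0:ℝ) < ∏ i ∈ Finset.range p, a' (1 + (i:ℤ)) :=
    Finset.prod_pos fun i _ => hpos _
  have hA0 : (0:ℝ) < ∏ i ∈ Finset.range p, a0 (1 + (i:ℤ)) :=
    Finset.prod_pos fun i _ => ha0pos _
  have h1 : (∏ i ∈ Finset.range p, a' (1 + (i:ℤ)))⁻¹
      = (∏ i ∈ Finset.range p, a0 (1 + (i:ℤ)))⁻¹ := by
    rw [← disc_coeff_top a' b' p hp, ← disc_coeff_top a0 b0 p hp, hdisc]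
  have hAeq : (∏ i ∈ Finset.range p, a' (1 + (i:ℤ)))
      = (∏ i ∈ Finset.range p, a0 (1 + (i:ℤ))) := by
    exact inv_injective h1
  refine ⟨hAeq, ?_⟩
  have h2 := disc_coeff_sub a' b' p hp
  rw [hdisc, disc_coeff_sub a0 b0 p hp, hAeq] at h2
  have hne : (∏ i ∈ Finset.range p, a0 (1 + (i:ℤ)))⁻¹ ≠ 0 := by positivity
  have := mul_right_cancel₀ hne h2.symm
  linarith [neg_injective this]

lemma stepBound (p : ℕ) (hp : 1 ≤ p) (ℓ M : ℝ) (hℓ : 0 < ℓ) (hM : 1 ≤ M)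
    (α β α' β' : ℤ → ℝ) (s : ℤ)
    (hpα : Function.Periodic α (p:ℤ)) (hpβ : Function.Periodic β (p:ℤ))
    (hpα' : Function.Periodic α' (p:ℤ)) (hpβ' : Function.Periodic β' (p:ℤ))
    (hprod : ∏ k ∈ Finset.range p, α (s + k) = ∏ k ∈ Finset.range p, α' (s + k))
    (hsum : ∑ k ∈ Finset.range p, β (s + k) = ∑ k ∈ Finset.range p, β' (s + k))
    (hbnd : ∀ k : ℕ, k < p → ℓ ≤ α (s+k) ∧ α (s+k) ≤ M ∧ ℓ ≤ α' (s+k) ∧ α' (s+k) ≤ M)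
    (m : ℤ) :
    ∑ k ∈ Finset.range p, (|α (m+k) - α' (m+k)| + |β (m+k) - β' (m+k)|)
      ≤ (M^p/ℓ^(p-1) + 2) *
        ∑ k ∈ Finset.range (p-1), (|α (s+k) - α' (s+k)| + |β (s+k) - β' (s+k)|) := by
  set w : ℤ → ℝ := fun j => |α j - α' j| + |β j - β' j| with hwdef
  have hw : Function.Periodic w (p:ℤ) := fun x => by
    simp only [hwdef, hpα x, hpα' x, hpβ x, hpβ' x]
  have h1 : ∑ k ∈ Finset.range p, w (m+k) = ∑ k ∈ Finset.range p, w (s+k) :=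
    periodicSumShift w p hw m s
  show ∑ k ∈ Finset.range p, w (m+k) ≤ _
  rw [h1]
  set K := M^p/ℓ^(p-1) with hK
  have hKnn : 0 ≤ K := by positivity
  have ha := KLa p hp α α' s ℓ M hℓ hM hbnd hprod
  have hb := KLb p hp β β' s hsum
  set Sw := ∑ k ∈ Finset.range (p-1), w (s+k) with hSw
  have hSwnn : 0 ≤ Sw := Finset.sum_nonneg fun _ _ => by positivity
  have hSa : ∑ k ∈ Finset.range (p-1), |α (s+k) - α' (s+k)| ≤ Sw := by
    apply Finset.sum_le_sum; intro k _; exact le_add_of_nonneg_right (abs_nonneg _)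
  have hSb : ∑ k ∈ Finset.range (p-1), |β (s+k) - β' (s+k)| ≤ Sw := by
    apply Finset.sum_le_sum; intro k _; exact le_add_of_nonneg_left (abs_nonneg _)
  obtain ⟨q, rfl⟩ : ∃ q, p = q + 1 := ⟨p - 1, by omega⟩
  simp only [Nat.add_sub_cancel] at *
  rw [Finset.sum_range_succ]
  have hlast : w (s + q) ≤ (K + 1) * Sw := by
    have h2 : |α (s+(q:ℤ)) - α' (s+q)| ≤ K * Sw := by
      calc |α (s+(q:ℤ)) - α' (s+q)| ≤ K * ∑ k ∈ Finset.range q, |α (s+k) - α' (s+k)| := ha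
        _ ≤ K * Sw := mul_le_mul_of_nonneg_left hSa hKnn
    have h3 : |β (s+(q:ℤ)) - β' (s+q)| ≤ Sw := le_trans hb hSb
    calc w (s+q) = |α (s+(q:ℤ)) - α' (s+q)| + |β (s+(q:ℤ)) - β' (s+q)| := rfl
      _ ≤ K * Sw + Sw := add_le_add h2 h3
      _ = (K + 1) * Sw := by ring
  have hsum2 : ∑ k ∈ Finset.range q, w (s+k) ≤ Sw := le_of_eq rfl
  linarith

lemma stepBoundB (p : ℕ) (hp : 1 ≤ p) (β β' : ℤ → ℝ) (s : ℤ)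
    (hpβ : Function.Periodic β (p:ℤ)) (hpβ' : Function.Periodic β' (p:ℤ))
    (hsum : ∑ k ∈ Finset.range p, β (s + k) = ∑ k ∈ Finset.range p, β' (s + k))
    (m : ℤ) :
    ∑ k ∈ Finset.range p, |β (m+k) - β' (m+k)|
      ≤ 2 * ∑ k ∈ Finset.range (p-1), |β (s+k) - β' (s+k)| := by
  set w : ℤ → ℝ := fun j => |β j - β' j| with hwdef
  have hw : Function.Periodic w (p:ℤ) := fun x => by
    simp only [hwdef, hpβ x, hpβ' x]
  have h1 : ∑ k ∈ Finset.range p, w (m+k) = ∑ k ∈ Finset.range p, w (s+k) :=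
    periodicSumShift w p hw m s
  show ∑ k ∈ Finset.range p, w (m+k) ≤ _
  rw [h1]
  have hb := KLb p hp β β' s hsum
  set Sw := ∑ k ∈ Finset.range (p-1), w (s+k) with hSw
  obtain ⟨q, rfl⟩ : ∃ q, p = q + 1 := ⟨p - 1, by omega⟩
  simp only [Nat.add_sub_cancel] at *
  rw [Finset.sum_range_succ]
  have : w (s + q) ≤ Sw := le_trans hb (le_of_eq rfl)
  linarith [le_refl Sw]

lemma dFin_nonneg (p : ℕ) (a b : ℕ → ℝ) (a' b' : ℤ → ℝ) (m : ℕ) :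
    0 ≤ dFin p a b a' b' m :=
  Finset.sum_nonneg fun _ _ => by positivity

lemma dFinT_nonneg (p : ℕ) (a0 b0 : ℤ → ℝ) (a b : ℕ → ℝ) (r : ℕ) :
    0 ≤ dFinT p a0 b0 a b r := by
  apply Real.sInf_nonneg
  rintro x ⟨a', b', -, rfl⟩
  exact dFin_nonneg p a b a' b' r

lemma dFinT_near (p : ℕ) (a0 b0 : ℤ → ℝ) (h0 : InTorus p a0 b0 a0 b0)
    (a b : ℕ → ℝ) (r : ℕ) (δ : ℝ) (hδ : 0 < δ) :
    ∃ a' b', InTorus p a0 b0 a' b' ∧ dFin p a b a' b' r < dFinT p a0 b0 a b r + δ := by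
  have hne : {x : ℝ | ∃ a' b' : ℤ → ℝ, InTorus p a0 b0 a' b' ∧ x = dFin p a b a' b' r}.Nonempty :=
    ⟨dFin p a b a0 b0 r, a0, b0, h0, rfl⟩
  have hlt : dFinT p a0 b0 a b r < dFinT p a0 b0 a b r + δ := by linarith
  obtain ⟨x, ⟨a', b', htor, rfl⟩, hx⟩ := exists_lt_of_csInf_lt hne hlt
  exact ⟨a', b', htor, hx⟩

lemma dFin_term_le (p : ℕ) (a b : ℕ → ℝ) (a' b' : ℤ → ℝ) (r k : ℕ) (hk : k < p) :
    |a (r + k) - a' ((r:ℤ) + k)| + |b (r + k) - b' ((r:ℤ) + k)| ≤ dFin p a b a' b' r :=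
  Finset.single_le_sum (f := fun k => |a (r + k) - a' ((r:ℤ) + k)| + |b (r + k) - b' ((r:ℤ) + k)|)
    (fun _ _ => by positivity) (Finset.mem_range.mpr hk)

set_option maxHeartbeats 2000000 in
/-- pointwise control of `(a,b)` by a single `d̃` distance to `J₀`
plus summed `d̃` distances to the isospectral torus. -/
theorem statement8 (p : ℕ) (hp : 1 ≤ p)
    (a0 b0 : ℤ → ℝ) (ha0pos : ∀ n, 0 < a0 n)
    (hpera : Function.Periodic a0 (p : ℤ)) (hperb : Function.Periodic b0 (p : ℤ))
    (ε : ℝ) (hε : 0 < ε) :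
    ∃ C : ℝ, 0 < C ∧
      ∀ a b : ℕ → ℝ, (∀ n : ℕ, 1 ≤ n → ε < a n ∧ a n < ε⁻¹) →
        ∀ m n : ℕ, 1 ≤ m → m ≤ n →
          |a n - a0 (n : ℤ)| + |b n - b0 (n : ℤ)| ≤
            dFin p a b a0 b0 m +
              C * ∑ r ∈ Finset.Icc m (n + 1 - p), dFinT p a0 b0 a b r := by
  set L : ℝ := ε/2 with hLdef
  set M : ℝ := ε⁻¹ + ε + 1 with hMdef
  set K : ℝ := M^p / L^(p-1) with hKdef
  set Ba : ℝ := ∑ i ∈ Finset.range p, |a0 (1+(i:ℤ))| with hBadef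
  set Ka : ℝ := ε⁻¹ + Ba with hKadef
  have hεinv : 0 < ε⁻¹ := by positivity
  have hLpos : 0 < L := by positivity
  have hM1 : 1 ≤ M := by rw [hMdef]; linarith
  have hKnn : 0 ≤ K := by positivity
  have hBann : 0 ≤ Ba := Finset.sum_nonneg fun _ _ => abs_nonneg _
  have hKapos : 0 < Ka := by positivity
  have hCpos : (0:ℝ) < 2*K + 4*Ka/ε + 20 := by positivity
  refine ⟨2*K + 4*Ka/ε + 20, hCpos, ?_⟩
  intro a b hab m n hm hmn
  have htorus0 : InTorus p a0 b0 a0 b0 := ⟨ha0pos, hpera, hperb, rfl⟩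
  have hTnn : ∀ r, 0 ≤ dFinT p a0 b0 a b r := fun r => dFinT_nonneg p a0 b0 a b r
  have hSnn : 0 ≤ ∑ r ∈ Finset.Icc m (n + 1 - p), dFinT p a0 b0 a b r :=
    Finset.sum_nonneg fun r _ => hTnn r
  rcases Nat.lt_or_ge n (m + p) with hcase | hcase
  · -- easy case : n < m + p
    have hk : n - m < p := by omega
    have h1 := dFin_term_le p a b a0 b0 m (n - m) hk
    have e1 : m + (n - m) = n := by omega
    have e2 : (m:ℤ) + ((n - m : ℕ) : ℤ) = (n:ℤ) := by push_cast; omega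
    rw [e1, e2] at h1
    nlinarith [hSnn, hCpos]
  · -- hard case : m + p ≤ n
    apply le_of_forall_pos_le_add
    intro γ hγ
    set R := n + 1 - p with hRdef
    have hmR : m + 1 ≤ R := by omega
    have hRn : R + (p - 1) = n := by omega
    set Nd : ℝ := 2 + (2*K + 10) * ((R:ℝ) + 1) with hNd
    have hNdpos : 0 < Nd := by positivity
    set δ : ℝ := min (ε/8) (γ/Nd) with hδdef
    have hδpos : 0 < δ := lt_min (by positivity) (by positivity)
    have hδε : δ ≤ ε/8 := min_le_left _ _
    have hδγ : δ * Nd ≤ γ := by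
      rw [← le_div_iff₀ hNdpos]
      exact min_le_right _ _
    -- choose near-optimal torus points
    have hch : ∀ r : ℕ, ∃ α' β', InTorus p a0 b0 α' β' ∧
        dFin p a b α' β' r < dFinT p a0 b0 a b r + δ :=
      fun r => dFinT_near p a0 b0 htorus0 a b r δ hδpos
    choose α β htor hdnear using hch
    have hαpos : ∀ r j, 0 < α r j := fun r => (htor r).1
    have hαper : ∀ r, Function.Periodic (α r) (p:ℤ) := fun r => (htor r).2.1
    have hβper : ∀ r, Function.Periodic (β r) (p:ℤ) := fun r => (htor r).2.2.1
    have hprodA : ∀ (r : ℕ) (s : ℤ), ∏ k ∈ Finset.range p, α r (s + k)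
        = ∏ i ∈ Finset.range p, a0 (1 + (i:ℤ)) := fun r s =>
      (periodicProdShift (α r) p (hαper r) (fun j => ne_of_gt (hαpos r j)) s 1).trans
        (torus_prod_sum p hp a0 b0 ha0pos _ _ (htor r)).1
    have hsumB : ∀ (r : ℕ) (s : ℤ), ∑ k ∈ Finset.range p, β r (s + k)
        = ∑ i ∈ Finset.range p, b0 (1 + (i:ℤ)) := fun r s =>
      (periodicSumShift (β r) p (hβper r) s 1).trans
        (torus_prod_sum p hp a0 b0 ha0pos _ _ (htor r)).2
    -- window bounds for near-optimal points with small defect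
    have hbound : ∀ r : ℕ, 1 ≤ r → dFinT p a0 b0 a b r ≤ ε/4 →
        ∀ k : ℕ, k < p → L ≤ α r ((r:ℤ) + k) ∧ α r ((r:ℤ) + k) ≤ M := by
      intro r hr hTr k hk
      have h1 := (dFin_term_le p a b (α r) (β r) r k hk).trans (le_of_lt (hdnear r))
      have h2 : |a (r + k) - α r ((r:ℤ) + k)| ≤ ε/4 + ε/8 := by
        have := abs_nonneg (b (r + k) - β r ((r:ℤ) + k))
        linarith
      have h3 := hab (r + k) (by omega)
      have h4 := abs_le.mp h2
      constructor
      · rw [hLdef]; linarith [h4.1, h4.2, h3.1]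
      · rw [hMdef]; linarith [h4.1, h4.2, h3.2, hε]
    -- bound on the sum over the shared (p-1)-window between consecutive points
    have hoverlap : ∀ r : ℕ,
        ∑ k ∈ Finset.range (p-1),
          (|α r ((r:ℤ)+1+k) - α (r+1) ((r:ℤ)+1+k)| + |β r ((r:ℤ)+1+k) - β (r+1) ((r:ℤ)+1+k)|)
        ≤ dFinT p a0 b0 a b r + dFinT p a0 b0 a b (r+1) + 2*δ := by
      intro r
      have hpt : ∀ k : ℕ,
          |α r ((r:ℤ)+1+k) - α (r+1) ((r:ℤ)+1+k)| + |β r ((r:ℤ)+1+k) - β (r+1) ((r:ℤ)+1+k)|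
          ≤ (|a (r+1+k) - α r ((r:ℤ)+1+k)| + |b (r+1+k) - β r ((r:ℤ)+1+k)|)
            + (|a (r+1+k) - α (r+1) ((r:ℤ)+1+k)| + |b (r+1+k) - β (r+1) ((r:ℤ)+1+k)|) := by
        intro k
        have t1 := abs_sub_le (α r ((r:ℤ)+1+k)) (a (r+1+k)) (α (r+1) ((r:ℤ)+1+k))
        have t2 := abs_sub_le (β r ((r:ℤ)+1+k)) (b (r+1+k)) (β (r+1) ((r:ℤ)+1+k))
        rw [abs_sub_comm (α r ((r:ℤ)+1+k)) (a (r+1+k))] at t1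
        rw [abs_sub_comm (β r ((r:ℤ)+1+k)) (b (r+1+k))] at t2
        linarith
      have hsplit := Finset.sum_le_sum (fun k (_ : k ∈ Finset.range (p-1)) => hpt k)
      rw [Finset.sum_add_distrib, Finset.sum_add_distrib] at hsplit
      rw [Finset.sum_add_distrib]
      have hfirst : ∑ k ∈ Finset.range (p-1),
          (|a (r+1+k) - α r ((r:ℤ)+1+k)| + |b (r+1+k) - β r ((r:ℤ)+1+k)|)
          ≤ dFin p a b (α r) (β r) r := by
        have eterm : ∀ k : ℕ, (|a (r+1+k) - α r ((r:ℤ)+1+k)| + |b (r+1+k) - β r ((r:ℤ)+1+k)|)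
            = (fun j => |a (r+j) - α r ((r:ℤ)+(j:ℤ))| + |b (r+j) - β r ((r:ℤ)+(j:ℤ))|) (k+1) := by
          intro k
          have e1 : r+1+k = r+(k+1) := by omega
          have e2 : (r:ℤ)+1+(k:ℤ) = (r:ℤ)+((k+1:ℕ):ℤ) := by push_cast; ring
          simp only [e1, e2]
        rw [Finset.sum_congr rfl (fun k _ => eterm k)]
        have := sumTail (p-1) (fun j => |a (r+j) - α r ((r:ℤ)+(j:ℤ))| + |b (r+j) - β r ((r:ℤ)+(j:ℤ))|)
          (fun k => by positivity)
        have ep : p - 1 + 1 = p := by omega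
        rw [ep] at this
        exact this
      have hsecond : ∑ k ∈ Finset.range (p-1),
          (|a (r+1+k) - α (r+1) ((r:ℤ)+1+k)| + |b (r+1+k) - β (r+1) ((r:ℤ)+1+k)|)
          ≤ dFin p a b (α (r+1)) (β (r+1)) (r+1) := by
        have eterm : ∀ k : ℕ, (|a (r+1+k) - α (r+1) ((r:ℤ)+1+k)| + |b (r+1+k) - β (r+1) ((r:ℤ)+1+k)|)
            = |a ((r+1)+k) - α (r+1) (((r+1:ℕ):ℤ)+(k:ℤ))| + |b ((r+1)+k) - β (r+1) (((r+1:ℕ):ℤ)+(k:ℤ))| := by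
          intro k
          have e2 : (r:ℤ)+1+(k:ℤ) = ((r+1:ℕ):ℤ)+(k:ℤ) := by push_cast; ring
          rw [e2]
        rw [Finset.sum_congr rfl (fun k _ => eterm k)]
        apply Finset.sum_le_sum_of_subset_of_nonneg (Finset.range_subset_range.mpr (by omega))
        intro k _ _
        positivity
      have d1 := hdnear r
      have d2 := hdnear (r+1)
      linarith
    -- common final-extraction ingredients
    obtain ⟨k0, hk0, t0, ht0⟩ := windowRep p hp (m:ℤ) (n:ℤ)
    have hrepα := periodicAtRep (α R) p (hαper R) ht0
    have hrepβ := periodicAtRep (β R) p (hβper R) ht0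
    have hrepa0 := periodicAtRep a0 p hpera ht0
    have hrepb0 := periodicAtRep b0 p hperb ht0
    have hfin1 : |a n - α R (n:ℤ)| + |b n - β R (n:ℤ)| ≤ dFinT p a0 b0 a b R + δ := by
      have h1 := dFin_term_le p a b (α R) (β R) R (p-1) (by omega)
      have e1 : R + (p-1) = n := hRn
      have e2 : (R:ℤ) + ((p-1:ℕ):ℤ) = (n:ℤ) := by omega
      rw [e1, e2] at h1
      exact h1.trans (le_of_lt (hdnear R))
    have hTR : dFinT p a0 b0 a b R ≤ ∑ r ∈ Finset.Icc m R, dFinT p a0 b0 a b r :=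
      Finset.single_le_sum (fun r _ => hTnn r) (Finset.mem_Icc.mpr ⟨by omega, le_refl R⟩)
    have hTm : dFinT p a0 b0 a b m ≤ ∑ r ∈ Finset.Icc m R, dFinT p a0 b0 a b r :=
      Finset.single_le_sum (fun r _ => hTnn r) (Finset.mem_Icc.mpr ⟨le_refl m, by omega⟩)
    have hIco1 : ∑ r ∈ Finset.Ico m R, dFinT p a0 b0 a b r
        ≤ ∑ r ∈ Finset.Icc m R, dFinT p a0 b0 a b r := by
      apply Finset.sum_le_sum_of_subset_of_nonneg
      · intro x hx; simp only [Finset.mem_Ico, Finset.mem_Icc] at *; omega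
      · exact fun r _ _ => hTnn r
    have hIco2 : ∑ r ∈ Finset.Ico m R, dFinT p a0 b0 a b (r+1)
        ≤ ∑ r ∈ Finset.Icc m R, dFinT p a0 b0 a b r := by
      rw [Finset.sum_Ico_add']
      apply Finset.sum_le_sum_of_subset_of_nonneg
      · intro x hx; simp only [Finset.mem_Ico, Finset.mem_Icc] at *; omega
      · exact fun r _ _ => hTnn r
    have hcard : ((R - m : ℕ):ℝ) ≤ (R:ℝ) + 1 := by
      have : (R - m : ℕ) ≤ R + 1 := by omega
      exact_mod_cast this
    by_cases hgood : ∀ r, m ≤ r → r ≤ R → dFinT p a0 b0 a b r ≤ ε/4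
    · -- GOOD CASE
      have hstep : ∀ r, m ≤ r → r < R →
          (fun r' => ∑ k ∈ Finset.range p,
            (|α r' ((m:ℤ)+k) - a0 ((m:ℤ)+k)| + |β r' ((m:ℤ)+k) - b0 ((m:ℤ)+k)|)) (r+1)
          ≤ (fun r' => ∑ k ∈ Finset.range p,
            (|α r' ((m:ℤ)+k) - a0 ((m:ℤ)+k)| + |β r' ((m:ℤ)+k) - b0 ((m:ℤ)+k)|)) r
            + (fun r' => (K+2)*(dFinT p a0 b0 a b r' + dFinT p a0 b0 a b (r'+1) + 2*δ)) r := by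
        intro r hr hrR
        simp only
        have htri : ∑ k ∈ Finset.range p,
            (|α (r+1) ((m:ℤ)+k) - a0 ((m:ℤ)+k)| + |β (r+1) ((m:ℤ)+k) - b0 ((m:ℤ)+k)|)
            ≤ ∑ k ∈ Finset.range p,
              (|α r ((m:ℤ)+k) - a0 ((m:ℤ)+k)| + |β r ((m:ℤ)+k) - b0 ((m:ℤ)+k)|)
            + ∑ k ∈ Finset.range p,
              (|α r ((m:ℤ)+k) - α (r+1) ((m:ℤ)+k)| + |β r ((m:ℤ)+k) - β (r+1) ((m:ℤ)+k)|) := by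
          rw [← Finset.sum_add_distrib]
          apply Finset.sum_le_sum
          intro k _
          have u1 := abs_sub_le (α (r+1) ((m:ℤ)+k)) (α r ((m:ℤ)+k)) (a0 ((m:ℤ)+k))
          have u2 := abs_sub_le (β (r+1) ((m:ℤ)+k)) (β r ((m:ℤ)+k)) (b0 ((m:ℤ)+k))
          rw [abs_sub_comm (α (r+1) ((m:ℤ)+k)) (α r ((m:ℤ)+k))] at u1
          rw [abs_sub_comm (β (r+1) ((m:ℤ)+k)) (β r ((m:ℤ)+k))] at u2
          linarith
        have hTr : dFinT p a0 b0 a b r ≤ ε/4 := hgood r hr (by omega)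
        have hTr1 : dFinT p a0 b0 a b (r+1) ≤ ε/4 := hgood (r+1) (by omega) (by omega)
        have hbnds : ∀ k : ℕ, k < p →
            L ≤ α r ((r:ℤ)+1+k) ∧ α r ((r:ℤ)+1+k) ≤ M
            ∧ L ≤ α (r+1) ((r:ℤ)+1+k) ∧ α (r+1) ((r:ℤ)+1+k) ≤ M := by
          intro k hk
          have e2 : (r:ℤ)+1+(k:ℤ) = ((r+1:ℕ):ℤ)+(k:ℤ) := by push_cast; ring
          have hb2 := hbound (r+1) (by omega) hTr1 k hk
          rw [e2]
          refine ⟨?_, ?_, hb2.1, hb2.2⟩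
          · rcases Nat.lt_or_ge (k+1) p with hk2 | hk2
            · have e3 : ((r+1:ℕ):ℤ)+(k:ℤ) = (r:ℤ)+((k+1:ℕ):ℤ) := by push_cast; ring
              rw [e3]; exact (hbound r (by omega) hTr (k+1) hk2).1
            · have hkp : k + 1 = p := by omega
              have e4 : ((r+1:ℕ):ℤ)+(k:ℤ) = (r:ℤ)+(p:ℤ) := by
                push_cast; omega
              rw [e4, hαper r (r:ℤ)]
              have h0 := (hbound r (by omega) hTr 0 (by omega)).1
              simpa using h0
          · rcases Nat.lt_or_ge (k+1) p with hk2 | hk2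
            · have e3 : ((r+1:ℕ):ℤ)+(k:ℤ) = (r:ℤ)+((k+1:ℕ):ℤ) := by push_cast; ring
              rw [e3]; exact (hbound r (by omega) hTr (k+1) hk2).2
            · have hkp : k + 1 = p := by omega
              have e4 : ((r+1:ℕ):ℤ)+(k:ℤ) = (r:ℤ)+(p:ℤ) := by
                push_cast; omega
              rw [e4, hαper r (r:ℤ)]
              have h0 := (hbound r (by omega) hTr 0 (by omega)).2
              simpa using h0
        have hsb := stepBound p hp L M hLpos hM1 (α r) (β r) (α (r+1)) (β (r+1)) ((r:ℤ)+1)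
          (hαper r) (hβper r) (hαper (r+1)) (hβper (r+1))
          ((hprodA r _).trans (hprodA (r+1) _).symm)
          ((hsumB r _).trans (hsumB (r+1) _).symm)
          hbnds ((m:ℤ))
        rw [← hKdef] at hsb
        have hov := hoverlap r
        have hK2 : (0:ℝ) ≤ K + 2 := by linarith
        have hmul : (K+2) * (∑ k ∈ Finset.range (p-1),
            (|α r ((r:ℤ)+1+k) - α (r+1) ((r:ℤ)+1+k)| + |β r ((r:ℤ)+1+k) - β (r+1) ((r:ℤ)+1+k)|))
            ≤ (K+2)*(dFinT p a0 b0 a b r + dFinT p a0 b0 a b (r+1) + 2*δ) :=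
          mul_le_mul_of_nonneg_left hov hK2
        linarith
      have hchain := chainLe
        (fun r' => ∑ k ∈ Finset.range p,
          (|α r' ((m:ℤ)+k) - a0 ((m:ℤ)+k)| + |β r' ((m:ℤ)+k) - b0 ((m:ℤ)+k)|))
        (fun r' => (K+2)*(dFinT p a0 b0 a b r' + dFinT p a0 b0 a b (r'+1) + 2*δ))
        m R (by omega) hstep
      have hbase : ∑ k ∈ Finset.range p,
          (|α m ((m:ℤ)+k) - a0 ((m:ℤ)+k)| + |β m ((m:ℤ)+k) - b0 ((m:ℤ)+k)|)
          ≤ dFin p a b a0 b0 m + (dFinT p a0 b0 a b m + δ) := by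
        have h1 : ∑ k ∈ Finset.range p,
            (|α m ((m:ℤ)+k) - a0 ((m:ℤ)+k)| + |β m ((m:ℤ)+k) - b0 ((m:ℤ)+k)|)
            ≤ dFin p a b a0 b0 m + dFin p a b (α m) (β m) m := by
          simp only [dFin]
          rw [← Finset.sum_add_distrib]
          apply Finset.sum_le_sum
          intro k _
          have u1 := abs_sub_le (α m ((m:ℤ)+k)) (a (m+k)) (a0 ((m:ℤ)+k))
          have u2 := abs_sub_le (β m ((m:ℤ)+k)) (b (m+k)) (b0 ((m:ℤ)+k))
          rw [abs_sub_comm (α m ((m:ℤ)+k)) (a (m+k))] at u1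
          rw [abs_sub_comm (β m ((m:ℤ)+k)) (b (m+k))] at u2
          linarith
        have h2 := hdnear m
        linarith
      have hgterm : |α R (n:ℤ) - a0 (n:ℤ)| + |β R (n:ℤ) - b0 (n:ℤ)|
          ≤ ∑ k ∈ Finset.range p,
            (|α R ((m:ℤ)+k) - a0 ((m:ℤ)+k)| + |β R ((m:ℤ)+k) - b0 ((m:ℤ)+k)|) := by
        rw [hrepα, hrepβ, hrepa0, hrepb0]
        exact Finset.single_le_sum
          (f := fun k : ℕ => |α R ((m:ℤ)+k) - a0 ((m:ℤ)+k)| + |β R ((m:ℤ)+k) - b0 ((m:ℤ)+k)|)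
          (fun _ _ => by positivity) (Finset.mem_range.mpr hk0)
      have htrin : |a n - a0 ((n:ℕ):ℤ)| + |b n - b0 ((n:ℕ):ℤ)|
          ≤ (|a n - α R (n:ℤ)| + |b n - β R (n:ℤ)|)
            + (|α R (n:ℤ) - a0 (n:ℤ)| + |β R (n:ℤ) - b0 (n:ℤ)|) := by
        have u1 := abs_sub_le (a n) (α R (n:ℤ)) (a0 (n:ℤ))
        have u2 := abs_sub_le (b n) (β R (n:ℤ)) (b0 (n:ℤ))
        linarith
      -- sum of the step costs
      have hEsum : ∑ r ∈ Finset.Ico m R, (K+2)*(dFinT p a0 b0 a b r + dFinT p a0 b0 a b (r+1) + 2*δ)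
          ≤ (K+2)*(2*(∑ r ∈ Finset.Icc m R, dFinT p a0 b0 a b r) + 2*δ*((R-m:ℕ):ℝ)) := by
        rw [← Finset.mul_sum]
        apply mul_le_mul_of_nonneg_left _ (by linarith : (0:ℝ) ≤ K + 2)
        rw [Finset.sum_add_distrib, Finset.sum_add_distrib, Finset.sum_const, Nat.card_Ico,
          nsmul_eq_mul]
        have := hIco1; have := hIco2
        linarith
      -- putting it together
      have hδ1 : 2*δ + (K+2)*(2*δ*((R-m:ℕ):ℝ)) ≤ γ := by
        have hδnn : 0 ≤ δ := le_of_lt hδpos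
        have hRm : (0:ℝ) ≤ ((R-m:ℕ):ℝ) := by positivity
        have e1 : 2*(K+2) * ((R-m:ℕ):ℝ) ≤ (2*K+10) * ((R:ℝ)+1) :=
          mul_le_mul (by linarith) hcard hRm (by linarith)
        have h1 : (K+2)*(2*δ*((R-m:ℕ):ℝ)) ≤ (2*K+10)*((R:ℝ)+1)*δ := by
          have := mul_le_mul_of_nonneg_right e1 hδnn
          calc (K+2)*(2*δ*((R-m:ℕ):ℝ)) = (2*(K+2) * ((R-m:ℕ):ℝ)) * δ := by ring
            _ ≤ ((2*K+10) * ((R:ℝ)+1)) * δ := this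
            _ = (2*K+10)*((R:ℝ)+1)*δ := by ring
        have h2 : 2*δ + (2*K+10)*((R:ℝ)+1)*δ = δ * Nd := by rw [hNd]; ring
        linarith
      have hCge : (2*K+6) * (∑ r ∈ Finset.Icc m R, dFinT p a0 b0 a b r)
          ≤ (2*K + 4*Ka/ε + 20) * (∑ r ∈ Finset.Icc m R, dFinT p a0 b0 a b r) := by
        apply mul_le_mul_of_nonneg_right _ hSnn
        have : 0 < 4*Ka/ε := div_pos (by linarith) hε
        linarith
      linarith [hfin1, hgterm, htrin, hchain, hbase, hEsum, hδ1, hTR, hTm, hCge]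
    · -- BAD CASE
      push_neg at hgood
      obtain ⟨r0, hr0m, hr0R, hr0⟩ := hgood
      have hTr0 : dFinT p a0 b0 a b r0 ≤ ∑ r ∈ Finset.Icc m R, dFinT p a0 b0 a b r :=
        Finset.single_le_sum (fun r _ => hTnn r) (Finset.mem_Icc.mpr ⟨hr0m, hr0R⟩)
      have h9 : (0:ℝ) < 4*Ka/ε := div_pos (by linarith) hε
      -- the a-part is controlled by the large torus distance
      have haN : |a n - a0 ((n:ℕ):ℤ)| ≤ Ka := by
        have h3 := hab n (by omega)
        have h4 : |a n| ≤ ε⁻¹ := by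
          rw [abs_of_pos (lt_trans hε h3.1)]; exact le_of_lt h3.2
        obtain ⟨k1, hk1, t1, ht1⟩ := windowRep p hp 1 ((n:ℕ):ℤ)
        have h5 : a0 ((n:ℕ):ℤ) = a0 (1 + (k1:ℤ)) := periodicAtRep a0 p hpera ht1
        have h6 : |a0 (1 + (k1:ℤ))| ≤ Ba := by
          rw [hBadef]
          exact Finset.single_le_sum (f := fun i : ℕ => |a0 (1+(i:ℤ))|)
            (fun _ _ => abs_nonneg _) (Finset.mem_range.mpr hk1)
        have h7 := abs_sub (a n) (a0 ((n:ℕ):ℤ))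
        rw [h5] at h7
        rw [hKadef, h5]
        linarith
      have haN2 : |a n - a0 ((n:ℕ):ℤ)|
          ≤ (4*Ka/ε) * (∑ r ∈ Finset.Icc m R, dFinT p a0 b0 a b r) := by
        have h7 : Ka ≤ (4*Ka/ε) * dFinT p a0 b0 a b r0 := by
          have h8 : (4*Ka/ε) * (ε/4) = Ka := by field_simp
          nlinarith [hr0]
        have h10 : (4*Ka/ε) * dFinT p a0 b0 a b r0
            ≤ (4*Ka/ε) * (∑ r ∈ Finset.Icc m R, dFinT p a0 b0 a b r) :=
          mul_le_mul_of_nonneg_left hTr0 (le_of_lt h9)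
        exact le_trans haN (le_trans h7 h10)
      -- the b-part via an unconditional chain
      have hstepb : ∀ r, m ≤ r → r < R →
          (fun r' => ∑ k ∈ Finset.range p, |β r' ((m:ℤ)+k) - b0 ((m:ℤ)+k)|) (r+1)
          ≤ (fun r' => ∑ k ∈ Finset.range p, |β r' ((m:ℤ)+k) - b0 ((m:ℤ)+k)|) r
            + (fun r' => 2*(dFinT p a0 b0 a b r' + dFinT p a0 b0 a b (r'+1) + 2*δ)) r := by
        intro r hr hrR
        simp only
        have htri : ∑ k ∈ Finset.range p, |β (r+1) ((m:ℤ)+k) - b0 ((m:ℤ)+k)|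
            ≤ ∑ k ∈ Finset.range p, |β r ((m:ℤ)+k) - b0 ((m:ℤ)+k)|
              + ∑ k ∈ Finset.range p, |β r ((m:ℤ)+k) - β (r+1) ((m:ℤ)+k)| := by
          rw [← Finset.sum_add_distrib]
          apply Finset.sum_le_sum
          intro k _
          have u2 := abs_sub_le (β (r+1) ((m:ℤ)+k)) (β r ((m:ℤ)+k)) (b0 ((m:ℤ)+k))
          rw [abs_sub_comm (β (r+1) ((m:ℤ)+k)) (β r ((m:ℤ)+k))] at u2
          linarith
        have hsb := stepBoundB p hp (β r) (β (r+1)) ((r:ℤ)+1) (hβper r) (hβper (r+1))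
          ((hsumB r _).trans (hsumB (r+1) _).symm) ((m:ℤ))
        have hb2 : ∑ k ∈ Finset.range (p-1), |β r ((r:ℤ)+1+k) - β (r+1) ((r:ℤ)+1+k)|
            ≤ ∑ k ∈ Finset.range (p-1),
              (|α r ((r:ℤ)+1+k) - α (r+1) ((r:ℤ)+1+k)| + |β r ((r:ℤ)+1+k) - β (r+1) ((r:ℤ)+1+k)|) :=
          Finset.sum_le_sum fun k _ => le_add_of_nonneg_left (abs_nonneg _)
        have hov := hoverlap r
        have hmul := mul_le_mul_of_nonneg_left (hb2.trans hov) (by norm_num : (0:ℝ) ≤ 2)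
        linarith
      have hchainb := chainLe
        (fun r' => ∑ k ∈ Finset.range p, |β r' ((m:ℤ)+k) - b0 ((m:ℤ)+k)|)
        (fun r' => 2*(dFinT p a0 b0 a b r' + dFinT p a0 b0 a b (r'+1) + 2*δ))
        m R (by omega) hstepb
      have hbaseb : ∑ k ∈ Finset.range p, |β m ((m:ℤ)+k) - b0 ((m:ℤ)+k)|
          ≤ dFin p a b a0 b0 m + (dFinT p a0 b0 a b m + δ) := by
        have h1 : ∑ k ∈ Finset.range p, |β m ((m:ℤ)+k) - b0 ((m:ℤ)+k)|
            ≤ dFin p a b a0 b0 m + dFin p a b (α m) (β m) m := by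
          simp only [dFin]
          rw [← Finset.sum_add_distrib]
          apply Finset.sum_le_sum
          intro k _
          have u2 := abs_sub_le (β m ((m:ℤ)+k)) (b (m+k)) (b0 ((m:ℤ)+k))
          rw [abs_sub_comm (β m ((m:ℤ)+k)) (b (m+k))] at u2
          have u3 := abs_nonneg (a (m+k) - α m ((m:ℤ)+k))
          have u4 := abs_nonneg (a (m+k) - a0 ((m:ℤ)+k))
          linarith
        have h2 := hdnear m
        linarith
      have hgtermb : |β R ((n:ℕ):ℤ) - b0 ((n:ℕ):ℤ)|
          ≤ ∑ k ∈ Finset.range p, |β R ((m:ℤ)+k) - b0 ((m:ℤ)+k)| := by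
        rw [hrepβ, hrepb0]
        exact Finset.single_le_sum (f := fun k : ℕ => |β R ((m:ℤ)+k) - b0 ((m:ℤ)+k)|)
          (fun _ _ => abs_nonneg _) (Finset.mem_range.mpr hk0)
      have hfin1b : |b n - β R ((n:ℕ):ℤ)| ≤ dFinT p a0 b0 a b R + δ := by
        have := abs_nonneg (a n - α R ((n:ℕ):ℤ))
        linarith [hfin1]
      have htrinb : |b n - b0 ((n:ℕ):ℤ)|
          ≤ |b n - β R ((n:ℕ):ℤ)| + |β R ((n:ℕ):ℤ) - b0 ((n:ℕ):ℤ)| := abs_sub_le _ _ _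
      have hEsumb : ∑ r ∈ Finset.Ico m R,
          2*(dFinT p a0 b0 a b r + dFinT p a0 b0 a b (r+1) + 2*δ)
          ≤ 2*(2*(∑ r ∈ Finset.Icc m R, dFinT p a0 b0 a b r) + 2*δ*((R-m:ℕ):ℝ)) := by
        rw [← Finset.mul_sum]
        apply mul_le_mul_of_nonneg_left _ (by norm_num : (0:ℝ) ≤ 2)
        rw [Finset.sum_add_distrib, Finset.sum_add_distrib, Finset.sum_const, Nat.card_Ico,
          nsmul_eq_mul]
        linarith [hIco1, hIco2]
      have hδ1b : 2*δ + 2*(2*δ*((R-m:ℕ):ℝ)) ≤ γ := by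
        have hδnn : 0 ≤ δ := le_of_lt hδpos
        have hRm : (0:ℝ) ≤ ((R-m:ℕ):ℝ) := by positivity
        have e1 : 4 * ((R-m:ℕ):ℝ) ≤ (2*K+10) * ((R:ℝ)+1) :=
          mul_le_mul (by linarith) hcard hRm (by linarith)
        have h1 : 2*(2*δ*((R-m:ℕ):ℝ)) ≤ (2*K+10)*((R:ℝ)+1)*δ := by
          have := mul_le_mul_of_nonneg_right e1 hδnn
          calc 2*(2*δ*((R-m:ℕ):ℝ)) = (4 * ((R-m:ℕ):ℝ)) * δ := by ring
            _ ≤ ((2*K+10) * ((R:ℝ)+1)) * δ := this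
            _ = (2*K+10)*((R:ℝ)+1)*δ := by ring
        have h2 : 2*δ + (2*K+10)*((R:ℝ)+1)*δ = δ * Nd := by rw [hNd]; ring
        linarith
      have hCge : (4*Ka/ε + 6) * (∑ r ∈ Finset.Icc m R, dFinT p a0 b0 a b r)
          ≤ (2*K + 4*Ka/ε + 20) * (∑ r ∈ Finset.Icc m R, dFinT p a0 b0 a b r) := by
        apply mul_le_mul_of_nonneg_right _ hSnn
        linarith
      have hdm := dFin_nonneg p a b a0 b0 m
      have hexp : (4*Ka/ε + 6) * (∑ r ∈ Finset.Icc m R, dFinT p a0 b0 a b r)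
          = (4*Ka/ε) * (∑ r ∈ Finset.Icc m R, dFinT p a0 b0 a b r)
            + 6 * (∑ r ∈ Finset.Icc m R, dFinT p a0 b0 a b r) := by ring
      linarith [haN2, htrinb, hfin1b, hgtermb, hchainb, hbaseb, hEsumb, hδ1b, hTR, hTm, hCge]
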